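/- Let X be a path-connected space and w ∈ H²(X; ℤ/2). The operations Q¹ := Sq¹ and Q² := Sq² + w·(−) on H*(X; ℤ/2) satisfy the Adem-type relations Q¹Q¹ = 0 and Q²Q² = Q¹ Q² Q¹ in degrees where these compositions are defined, provided Sq¹ w = 0 and w² = Sq² w. -/
import Mathlib


/-- Let `A` be the mod-2 cohomology ring `H*(X; ℤ/2)` of a (path-connected) space,
a commutative ring in which `x + x = 0`, equipped with Steenrod squares `Sq¹, Sq²`:
additive operations satisfying `Sq¹Sq¹ = 0`, the Adem relation
`Sq²Sq² = Sq¹Sq²Sq¹` (equivalently `Sq²Sq² = Sq³Sq¹` with `Sq³ = Sq¹Sq²`), and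
the Cartan formulas.  Given `w ∈ H²(X; ℤ/2)` with `Sq¹ w = 0` and `Sq² w = w²`,
the twisted operations `Q¹ := Sq¹` and `Q² := Sq² + w·(−)` satisfy the Adem-type
relations `Q¹Q¹ = 0` and `Q²Q² = Q¹Q²Q¹`. -/
theorem twisted_steenrod_adem_relations
    (A : Type) [CommRing A]
    (hchar : ∀ x : A, x + x = 0)
    (Sq1 Sq2 : A → A)
    (hSq1_add : ∀ x y : A, Sq1 (x + y) = Sq1 x + Sq1 y)
    (hSq2_add : ∀ x y : A, Sq2 (x + y) = Sq2 x + Sq2 y)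
    (hSq1Sq1 : ∀ x : A, Sq1 (Sq1 x) = 0)
    (hAdem : ∀ x : A, Sq2 (Sq2 x) = Sq1 (Sq2 (Sq1 x)))
    (hCartan1 : ∀ x y : A, Sq1 (x * y) = Sq1 x * y + x * Sq1 y)
    (hCartan2 : ∀ x y : A, Sq2 (x * y) = Sq2 x * y + Sq1 x * Sq1 y + x * Sq2 y)
    (w : A) (hw1 : Sq1 w = 0) (hw2 : Sq2 w = w ^ 2) :
    (∀ x : A, Sq1 (Sq1 x) = 0) ∧
    (∀ x : A, (fun y => Sq2 y + w * y) ((fun y => Sq2 y + w * y) x) =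
      Sq1 ((fun y => Sq2 y + w * y) (Sq1 x))) := by
  refine ⟨hSq1Sq1, fun x => ?_⟩
  simp only
  rw [hSq2_add, hCartan2, hw1, hw2, hSq1_add, hCartan1, hw1, hSq1Sq1, hAdem]
  ring_nf
  have h2 : (2 : A) = 0 := by
    have := hchar (1 : A); linear_combination this
  have : ∀ a : A, 2 * a = 0 := fun a => by rw [h2, zero_mul]
  linear_combination (Sq2 x * w) * h2 + (x * w ^ 2) * h2
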